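/- Let $A_1, \ldots, A_r$ be positive semidefinite operators on a finite-dimensional Hilbert space, and let $P_s^* := \max\{\sum_{i=1}^r \operatorname{Tr} A_i E_i : E_i \ge 0, \sum_i E_i \le I\}$. Then $P_s^* \le \frac{1}{2(r-1)} \sum_{(k,l): k \ne l} \big(\frac{1}{2}\operatorname{Tr}(A_k + A_l) + \frac{1}{2}\|A_k - A_l\|_1\big)$. -/

import Mathlib

open Matrix
open scoped ComplexOrder

noncomputable def matAbs {m : ℕ} (A : Matrix (Fin m) (Fin m) ℂ) : Matrix (Fin m) (Fin m) ℂ :=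
  (Matrix.posSemidef_conjTranspose_mul_self A).1.eigenvectorUnitary.1 *
    diagonal (((↑) : ℝ → ℂ) ∘ Real.sqrt ∘ (Matrix.posSemidef_conjTranspose_mul_self A).1.eigenvalues) *
    (star (Matrix.posSemidef_conjTranspose_mul_self A).1.eigenvectorUnitary : Matrix (Fin m) (Fin m) ℂ)

noncomputable def traceNorm {m : ℕ} (A : Matrix (Fin m) (Fin m) ℂ) : ℝ :=
  ((matAbs A).trace).re

open Classical in
noncomputable def psdSqrt {m : ℕ} (A : Matrix (Fin m) (Fin m) ℂ) : Matrix (Fin m) (Fin m) ℂ :=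
  if h : A.PosSemidef then
    h.1.eigenvectorUnitary.1 * diagonal (((↑) : ℝ → ℂ) ∘ Real.sqrt ∘ h.1.eigenvalues) *
      (star h.1.eigenvectorUnitary : Matrix (Fin m) (Fin m) ℂ)
  else 0

noncomputable def fid {m : ℕ} (A B : Matrix (Fin m) (Fin m) ℂ) : ℝ :=
  traceNorm (psdSqrt A * psdSqrt B)

noncomputable def matPosPart {m : ℕ} (A : Matrix (Fin m) (Fin m) ℂ) : Matrix (Fin m) (Fin m) ℂ :=
  (2⁻¹ : ℂ) • (matAbs A + A)

noncomputable def matNegPart {m : ℕ} (A : Matrix (Fin m) (Fin m) ℂ) : Matrix (Fin m) (Fin m) ℂ :=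
  (2⁻¹ : ℂ) • (matAbs A - A)

section Aux

variable {m : ℕ}

lemma trace_re_nonneg {M : Matrix (Fin m) (Fin m) ℂ} (hM : M.PosSemidef) :
    0 ≤ M.trace.re := by
  rw [Matrix.trace]
  simp only [Matrix.diag]
  rw [Complex.re_sum]
  apply Finset.sum_nonneg
  intro i _
  exact (Complex.le_def.mp hM.diag_nonneg).1

lemma trace_mul_re_nonneg {M N : Matrix (Fin m) (Fin m) ℂ}
    (hM : M.PosSemidef) (hN : N.PosSemidef) : 0 ≤ (M * N).trace.re := by
  obtain ⟨S, hSS, hSH⟩ : ∃ S : Matrix (Fin m) (Fin m) ℂ, S * S = N ∧ Sᴴ = S := by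
    refine ⟨cfc Real.sqrt N, ?_, ?_⟩
    · rw [← cfc_mul Real.sqrt Real.sqrt N]
      conv_rhs => rw [← cfc_id' ℝ N (ha := hN.1.isSelfAdjoint)]
      refine cfc_congr fun x hx => ?_
      rw [hN.1.spectrum_real_eq_range_eigenvalues] at hx
      obtain ⟨i, rfl⟩ := hx
      exact Real.mul_self_sqrt (hN.eigenvalues_nonneg i)
    · exact (cfc_predicate Real.sqrt N : IsSelfAdjoint _)
  have h1 : M * N = M * S * S := by
    rw [mul_assoc, hSS]
  have h2 : (M * N).trace = (S * M * S).trace := by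
    rw [h1, Matrix.trace_mul_cycle]
  rw [h2]
  have h3 : S * M * S = S * M * (S)ᴴ := by
    rw [hSH]
  rw [h3]
  exact trace_re_nonneg (hM.mul_mul_conjTranspose_same _)

lemma conj_sq (U D : Matrix (Fin m) (Fin m) ℂ) (hU' : star U * U = 1) :
    (U * D * star U) ^ 2 = U * (D * D) * star U := by
  rw [pow_two]
  calc U * D * star U * (U * D * star U)
      = U * D * (star U * U) * (D * star U) := by simp only [mul_assoc]
    _ = U * (D * D) * star U := by rw [hU']; simp only [mul_one, mul_assoc]

lemma matAbs_spec {B : Matrix (Fin m) (Fin m) ℂ} (hB : B.IsHermitian) :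
    matAbs B = (hB.eigenvectorUnitary : Matrix (Fin m) (Fin m) ℂ) *
      diagonal (Complex.ofReal ∘ fun i => |hB.eigenvalues i|) *
      (star hB.eigenvectorUnitary : Matrix (Fin m) (Fin m) ℂ) := by
  set U := (hB.eigenvectorUnitary : Matrix (Fin m) (Fin m) ℂ) with hUdef
  set D := diagonal (Complex.ofReal ∘ fun i => |hB.eigenvalues i|) with hDdef
  set D0 := diagonal (Complex.ofReal ∘ hB.eigenvalues) with hD0def
  have hU' : star U * U = 1 := (Matrix.mem_unitaryGroup_iff').mp hB.eigenvectorUnitary.2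
  have hDpsd : D.PosSemidef := by
    refine Matrix.PosSemidef.diagonal fun i => ?_
    simp only [Function.comp_apply]
    rw [Complex.le_def]
    simp [abs_nonneg]
  have hCpsd : (U * D * star U).PosSemidef := by
    have := hDpsd.mul_mul_conjTranspose_same U
    exact this
  have hB2 : B = U * D0 * star U := hB.spectral_theorem
  have hDD : D * D = D0 * D0 := by
    rw [hDdef, hD0def, diagonal_mul_diagonal, diagonal_mul_diagonal]
    apply congrArg diagonal
    funext i
    simp only [Function.comp_apply]
    rw [← sq, ← sq, ← Complex.ofReal_pow, ← Complex.ofReal_pow, sq_abs]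
  have hsq : (U * D * star U) ^ 2 = Bᴴ * B := by
    rw [conj_sq U D hU', hDD, hB.eq]
    conv_rhs => rw [hB2]
    rw [← conj_sq U D0 hU', pow_two]
  have e1 : matAbs B = cfc Real.sqrt (Bᴴ * B) := by
    rw [(Matrix.posSemidef_conjTranspose_mul_self B).1.cfc_eq]; rfl
  have e2 : U * D * star U = cfc (fun x : ℝ => |x|) B := by
    rw [hB.cfc_eq]; rfl
  rw [e1, e2, hB.eq, ← pow_two, ← cfc_comp_pow Real.sqrt 2 B (ha := hB.isSelfAdjoint)]
  exact cfc_congr fun x _ => Real.sqrt_sq_eq_abs x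

lemma smul_psd {M : Matrix (Fin m) (Fin m) ℂ} (hM : M.PosSemidef) {c : ℝ} (hc : 0 ≤ c) :
    (((c : ℂ)) • M).PosSemidef := by
  exact hM.smul (by exact_mod_cast hc)

lemma matPosPart_psd {B : Matrix (Fin m) (Fin m) ℂ} (hB : B.IsHermitian) :
    (matPosPart B).PosSemidef := by
  obtain ⟨U, f, hBeq, habs⟩ :
      ∃ (U : Matrix (Fin m) (Fin m) ℂ) (f : Fin m → ℝ),
        B = U * diagonal (Complex.ofReal ∘ f) * Uᴴ ∧
        matAbs B = U * diagonal (Complex.ofReal ∘ fun i => |f i|) * Uᴴ :=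
    ⟨_, _, hB.spectral_theorem, matAbs_spec hB⟩
  rw [matPosPart, show ((2⁻¹ : ℂ)) = ((2⁻¹ : ℝ) : ℂ) by norm_num]
  refine smul_psd ?_ (by norm_num)
  rw [habs, hBeq, ← Matrix.add_mul, ← Matrix.mul_add, Matrix.diagonal_add]
  have hfun : (fun i => (Complex.ofReal ∘ fun j => |f j|) i + (Complex.ofReal ∘ f) i)
      = Complex.ofReal ∘ fun i => |f i| + f i := by
    funext i; simp
  rw [hfun]
  have hDpsd : (diagonal (Complex.ofReal ∘ fun i => |f i| + f i)).PosSemidef := by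
    refine Matrix.PosSemidef.diagonal fun i => ?_
    rw [Complex.le_def]
    simp only [Function.comp_apply, Complex.ofReal_re, Complex.ofReal_im, Pi.zero_apply,
      Complex.zero_re, Complex.zero_im]
    exact ⟨by linarith [neg_abs_le (f i)], trivial⟩
  exact hDpsd.mul_mul_conjTranspose_same U

lemma matNegPart_psd {B : Matrix (Fin m) (Fin m) ℂ} (hB : B.IsHermitian) :
    (matNegPart B).PosSemidef := by
  obtain ⟨U, f, hBeq, habs⟩ :
      ∃ (U : Matrix (Fin m) (Fin m) ℂ) (f : Fin m → ℝ),
        B = U * diagonal (Complex.ofReal ∘ f) * Uᴴ ∧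
        matAbs B = U * diagonal (Complex.ofReal ∘ fun i => |f i|) * Uᴴ :=
    ⟨_, _, hB.spectral_theorem, matAbs_spec hB⟩
  rw [matNegPart, show ((2⁻¹ : ℂ)) = ((2⁻¹ : ℝ) : ℂ) by norm_num]
  refine smul_psd ?_ (by norm_num)
  rw [habs, hBeq, ← Matrix.sub_mul, ← Matrix.mul_sub, Matrix.diagonal_sub]
  have hfun : (fun i => (Complex.ofReal ∘ fun j => |f j|) i - (Complex.ofReal ∘ f) i)
      = Complex.ofReal ∘ fun i => |f i| - f i := by
    funext i; simp
  rw [hfun]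
  have hDpsd : (diagonal (Complex.ofReal ∘ fun i => |f i| - f i)).PosSemidef := by
    refine Matrix.PosSemidef.diagonal fun i => ?_
    rw [Complex.le_def]
    simp only [Function.comp_apply, Complex.ofReal_re, Complex.ofReal_im, Pi.zero_apply,
      Complex.zero_re, Complex.zero_im]
    exact ⟨by linarith [le_abs_self (f i)], trivial⟩
  exact hDpsd.mul_mul_conjTranspose_same U

lemma matPosPart_sub_matNegPart (B : Matrix (Fin m) (Fin m) ℂ) :
    matPosPart B - matNegPart B = B := by
  ext i j
  simp only [matPosPart, matNegPart, Matrix.sub_apply, Matrix.smul_apply, Matrix.add_apply,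
    smul_eq_mul]
  ring

lemma matPosPart_add_matNegPart (B : Matrix (Fin m) (Fin m) ℂ) :
    matPosPart B + matNegPart B = matAbs B := by
  ext i j
  simp only [matPosPart, matNegPart, Matrix.add_apply, Matrix.smul_apply, Matrix.sub_apply,
    smul_eq_mul]
  ring

lemma pair_bound {Ak Al Ek El : Matrix (Fin m) (Fin m) ℂ}
    (hAk : Ak.PosSemidef) (hAl : Al.PosSemidef)
    (hF : (1 - Ek - El).PosSemidef) (hG1 : (1 - Ek + El).PosSemidef)
    (hG2 : (1 + Ek - El).PosSemidef) :
    ((Ak * Ek).trace).re + ((Al * El).trace).re ≤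
      (1/2) * (((Ak + Al).trace).re) + (1/2) * traceNorm (Ak - Al) := by
  have hD : (Ak - Al).IsHermitian := hAk.1.sub hAl.1
  set P := matPosPart (Ak - Al) with hPdef
  set N := matNegPart (Ak - Al) with hNdef
  have hP : P.PosSemidef := matPosPart_psd hD
  have hN : N.PosSemidef := matNegPart_psd hD
  have hPN : P - N = Ak - Al := matPosPart_sub_matNegPart _
  have h1 : 0 ≤ ((Ak + Al) * (1 - Ek - El)).trace.re :=
    trace_mul_re_nonneg (hAk.add hAl) hF
  have h2 : 0 ≤ (P * (1 - Ek + El)).trace.re := trace_mul_re_nonneg hP hG1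
  have h3 : 0 ≤ (N * (1 + Ek - El)).trace.re := trace_mul_re_nonneg hN hG2
  have e1 : (Ak + Al) * (1 - Ek - El)
      = (Ak + Al) - (Ak * Ek + Ak * El + Al * Ek + Al * El) := by noncomm_ring
  have e2 : P * (1 - Ek + El) = P - P * Ek + P * El := by noncomm_ring
  have e3 : N * (1 + Ek - El) = N + N * Ek - N * El := by noncomm_ring
  rw [e1] at h1; rw [e2] at h2; rw [e3] at h3
  simp only [Matrix.trace_sub, Matrix.trace_add, Complex.sub_re, Complex.add_re] at h1 h2 h3
  have e4 : (P * Ek).trace.re - (N * Ek).trace.re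
      = (Ak * Ek).trace.re - (Al * Ek).trace.re := by
    have : (P - N) * Ek = (Ak - Al) * Ek := by rw [hPN]
    have := congrArg (fun M => (Matrix.trace M).re) this
    simpa [Matrix.sub_mul, Matrix.trace_sub, Complex.sub_re] using this
  have e5 : (P * El).trace.re - (N * El).trace.re
      = (Ak * El).trace.re - (Al * El).trace.re := by
    have : (P - N) * El = (Ak - Al) * El := by rw [hPN]
    have := congrArg (fun M => (Matrix.trace M).re) this
    simpa [Matrix.sub_mul, Matrix.trace_sub, Complex.sub_re] using this
  have tn : traceNorm (Ak - Al) = P.trace.re + N.trace.re := by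
    rw [traceNorm, ← matPosPart_add_matNegPart (Ak - Al), Matrix.trace_add, Complex.add_re]
  rw [tn]
  simp only [Matrix.trace_add, Complex.add_re] at *
  linarith

lemma psd_sum {ι : Type*} (s : Finset ι) (f : ι → Matrix (Fin m) (Fin m) ℂ)
    (hf : ∀ i ∈ s, (f i).PosSemidef) : (∑ i ∈ s, f i).PosSemidef := by
  classical
  induction s using Finset.induction with
  | empty => simpa using Matrix.PosSemidef.zero
  | insert a s hx ih =>
    rw [Finset.sum_insert hx]
    exact (hf _ (Finset.mem_insert_self _ _)).add
      (ih fun i hi => hf i (Finset.mem_insert_of_mem hi))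

end Aux

theorem qiu_lower_decoupling {d r : ℕ} (hr : 2 ≤ r)
    (A : Fin r → Matrix (Fin d) (Fin d) ℂ) (hA : ∀ i, (A i).PosSemidef)
    (E : Fin r → Matrix (Fin d) (Fin d) ℂ) (hE : ∀ i, (E i).PosSemidef)
    (hE1 : (1 - ∑ i, E i).PosSemidef) :
    ∑ i, ((A i * E i).trace).re ≤
      (1 / (2 * ((r : ℝ) - 1))) * ∑ k, ∑ l,
        (if k = l then 0 else
          (1/2) * (((A k + A l).trace).re) + (1/2) * traceNorm (A k - A l)) := by
  classical
  -- basic psd facts about the E's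
  have hone_sub : ∀ k, (1 - E k).PosSemidef := by
    intro k
    have hsum : ∑ i, E i = E k + ∑ i ∈ Finset.univ.erase k, E i :=
      (Finset.add_sum_erase _ E (Finset.mem_univ k)).symm
    have : (1 : Matrix (Fin d) (Fin d) ℂ) - E k
        = (1 - ∑ i, E i) + ∑ i ∈ Finset.univ.erase k, E i := by
      rw [hsum]; abel
    rw [this]
    exact hE1.add (psd_sum _ _ fun i _ => hE i)
  have hone_sub2 : ∀ k l, k ≠ l → (1 - E k - E l).PosSemidef := by
    intro k l hkl
    have hl : l ∈ Finset.univ.erase k := Finset.mem_erase.mpr ⟨hkl.symm, Finset.mem_univ l⟩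
    have hsum : ∑ i, E i = E k + (E l + ∑ i ∈ (Finset.univ.erase k).erase l, E i) := by
      rw [Finset.add_sum_erase _ E hl, Finset.add_sum_erase _ E (Finset.mem_univ k)]
    have : (1 : Matrix (Fin d) (Fin d) ℂ) - E k - E l
        = (1 - ∑ i, E i) + ∑ i ∈ (Finset.univ.erase k).erase l, E i := by
      rw [hsum]; abel
    rw [this]
    exact hE1.add (psd_sum _ _ fun i _ => hE i)
  -- pairwise bounds
  set t : Fin r → ℝ := fun i => ((A i * E i).trace).re with ht
  have hpair : ∀ k l, k ≠ l → t k + t l ≤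
      (1/2) * (((A k + A l).trace).re) + (1/2) * traceNorm (A k - A l) := by
    intro k l hkl
    refine pair_bound (hA k) (hA l) (hone_sub2 k l hkl) ?_ ?_
    · have : (1 : Matrix (Fin d) (Fin d) ℂ) - E k + E l = (1 - E k) + E l := by abel
      rw [this]; exact (hone_sub k).add (hE l)
    · have : (1 : Matrix (Fin d) (Fin d) ℂ) + E k - E l = (1 - E l) + E k := by abel
      rw [this]; exact (hone_sub l).add (hE k)
  -- summation
  have hrpos : (0 : ℝ) < 2 * ((r : ℝ) - 1) := by
    have : (2 : ℝ) ≤ (r : ℝ) := by exact_mod_cast hr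
    nlinarith
  have key : 2 * ((r : ℝ) - 1) * ∑ i, t i ≤ ∑ k, ∑ l,
      (if k = l then 0 else
        (1/2) * (((A k + A l).trace).re) + (1/2) * traceNorm (A k - A l)) := by
    have step1 : ∑ k, ∑ l, (if k = l then (0:ℝ) else t k + t l) ≤ ∑ k, ∑ l,
        (if k = l then 0 else
          (1/2) * (((A k + A l).trace).re) + (1/2) * traceNorm (A k - A l)) := by
      refine Finset.sum_le_sum fun k _ => Finset.sum_le_sum fun l _ => ?_
      by_cases hkl : k = l
      · simp [hkl]
      · simp only [if_neg hkl]
        exact hpair k l hkl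
    refine le_trans (le_of_eq ?_) step1
    have inner : ∀ k, ∑ l, (if k = l then (0:ℝ) else t k + t l)
        = (r : ℝ) * t k + ∑ i, t i - (t k + t k) := by
      intro k
      have : ∀ l, (if k = l then (0:ℝ) else t k + t l)
          = (t k + t l) - (if k = l then (t k + t l) else 0) := by
        intro l; by_cases h : k = l <;> simp [h]
      simp only [this]
      rw [Finset.sum_sub_distrib, Finset.sum_ite_eq, if_pos (Finset.mem_univ k),
        Finset.sum_add_distrib, Finset.sum_const, Finset.card_univ, Fintype.card_fin]
      ring
    rw [Finset.sum_congr rfl fun k _ => inner k]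
    simp only [Finset.sum_sub_distrib, Finset.sum_add_distrib, ← Finset.mul_sum,
      Finset.sum_const, Finset.card_univ, Fintype.card_fin, nsmul_eq_mul]
    ring
  calc ∑ i, t i = (1 / (2 * ((r : ℝ) - 1))) * (2 * ((r : ℝ) - 1) * ∑ i, t i) := by
        field_simp
        rw [mul_div_cancel_right₀ _ (ne_of_gt (by linarith))]
    _ ≤ _ := by
        apply mul_le_mul_of_nonneg_left key
        positivity
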